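/- Linear characterization of the effect-domination equivalence (Lemma 4.1 / lem:mixture). Let G, Ĝ be DAGs on [d] and let H, Ĥ ∈ ℝ^{d×n} (n ≥ d) have full row rank, with rows h_i, ĥ_i. Then the following are equivalent: (a) there exist a permutation π of [d] and a C¹-diffeomorphism ψ : ℝ^d → ℝ^d such that (1) for all i, j ∈ [d], i ∈ pa_G(j) ⟺ π(i) ∈ pa_Ĝ(π(j)); (2) for every i ∈ [d], the component ψ_i(z) depends only on the coordinates z_j with j ∈ \bar{dom}_G(i) (i.e. ψ_i(z) = ψ_i(z′) whenever z_j = z′_j for all j ∈ \bar{dom}_G(i)); and (3) for every x ∈ ℝ^n and every i ∈ [d], ⟨ĥ_{π(i)}, x⟩ = ψ_i(Hx); (b) there exists a permutation π of [d] such that for all i, j ∈ [d], i ∈ pa_G(j) ⟺ π(i) ∈ pa_Ĝ(π(j)), and for every i ∈ [d], ĥ_{π(i)} lies in the linear span of {h_j : j ∈ \bar{dom}_G(i)}. -/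

import Mathlib

open Matrix MeasureTheory

/-- `E i j` means there is a directed edge `i → j`. A DAG has no directed cycles. -/
def IsDAG {d : ℕ} (E : Fin d → Fin d → Prop) : Prop :=
  ∀ i, ¬ Relation.TransGen E i i

/-- The set of parents of `i`. -/
def pa {d : ℕ} (E : Fin d → Fin d → Prop) (i : Fin d) : Set (Fin d) := {j | E j i}

/-- The set of children of `i`. -/
def ch {d : ℕ} (E : Fin d → Fin d → Prop) (i : Fin d) : Set (Fin d) := {j | E i j}

/-- `pa_G(i) ∪ {i}`. -/
def barPa {d : ℕ} (E : Fin d → Fin d → Prop) (i : Fin d) : Set (Fin d) := insert i (pa E i)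

/-- `ch_G(i) ∪ {i}`. -/
def barCh {d : ℕ} (E : Fin d → Fin d → Prop) (i : Fin d) : Set (Fin d) := insert i (ch E i)

/-- The effect-domination set `dom_G(i) = {j ∈ pa_G(i) : ch_G(i) ⊆ ch_G(j)}`. -/
def domSet {d : ℕ} (E : Fin d → Fin d → Prop) (i : Fin d) : Set (Fin d) :=
  {j | j ∈ pa E i ∧ ch E i ⊆ ch E j}

/-- `dom_G(i) ∪ {i}`. -/
def barDom {d : ℕ} (E : Fin d → Fin d → Prop) (i : Fin d) : Set (Fin d) :=
  insert i (domSet E i)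

/-- Ancestors of `i`: nodes with a directed path to `i`. -/
def ans {d : ℕ} (E : Fin d → Fin d → Prop) (i : Fin d) : Set (Fin d) :=
  {j | Relation.TransGen E j i}

/-- A set is ancestral if it is closed under taking ancestors. -/
def Ancestral {d : ℕ} (E : Fin d → Fin d → Prop) (S : Set (Fin d)) : Prop :=
  ∀ j ∈ S, ans E j ⊆ S

/-- The support of `B` matches the graph: `B i j ≠ 0 ↔ j ∈ \bar{pa}_G(i)`. -/
def SupportMatches {d : ℕ} (E : Fin d → Fin d → Prop) (B : Matrix (Fin d) (Fin d) ℝ) : Prop :=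
  ∀ i j, B i j ≠ 0 ↔ j ∈ barPa E i

/-- Node-level non-degeneracy: for every node `i`, the span of the `i`-th rows
`(B_k)_i` has dimension `|pa_G(i)| + 1`. -/
def NodeNonDegenerate {d K : ℕ} (E : Fin d → Fin d → Prop)
    (B : Fin K → Matrix (Fin d) (Fin d) ℝ) : Prop :=
  ∀ i, Module.finrank ℝ (Submodule.span ℝ (Set.range fun k => B k i)) = (pa E i).ncard + 1

/-- A function `f : ℝ^d → ℝ` depends only on the coordinates in `S`. -/
def DependsOnlyOn {d : ℕ} (S : Set (Fin d)) (f : (Fin d → ℝ) → ℝ) : Prop :=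
  ∀ z z' : Fin d → ℝ, (∀ j ∈ S, z j = z' j) → f z = f z'

/-- `ψ` is a C¹-diffeomorphism of `ℝ^d`. -/
def IsC1Diffeo {d : ℕ} (ψ : (Fin d → ℝ) → (Fin d → ℝ)) : Prop :=
  ContDiff ℝ 1 ψ ∧
    ∃ φ : (Fin d → ℝ) → (Fin d → ℝ),
      ContDiff ℝ 1 φ ∧ Function.LeftInverse φ ψ ∧ Function.RightInverse φ ψ

/-- Auxiliary: a full-row-rank matrix gives a surjective `mulVec`. -/
lemma mulVec_surjective_of_rank' {d n : ℕ} (H : Matrix (Fin d) (Fin n) ℝ)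
    (hH : H.rank = d) : Function.Surjective H.mulVec := by
  have hr : LinearMap.range H.mulVecLin = ⊤ := by
    apply Submodule.eq_top_of_finrank_eq
    rw [← Matrix.rank, hH, Module.finrank_pi]
    simp
  intro y
  obtain ⟨x, hx⟩ := LinearMap.range_eq_top.mp hr y
  exact ⟨x, hx⟩

/-- Linear characterization of the effect-domination equivalence (Lemma 4.1). -/
theorem dom_equivalence_linear_characterization {d n : ℕ} (hn : d ≤ n)
    (E Ehat : Fin d → Fin d → Prop) (hG : IsDAG E) (hGhat : IsDAG Ehat)
    (H Hhat : Matrix (Fin d) (Fin n) ℝ) (hH : H.rank = d) (hHhat : Hhat.rank = d) :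
    (∃ π : Equiv.Perm (Fin d), ∃ ψ : (Fin d → ℝ) → (Fin d → ℝ),
        IsC1Diffeo ψ ∧
        (∀ i j, i ∈ pa E j ↔ π i ∈ pa Ehat (π j)) ∧
        (∀ i, DependsOnlyOn (barDom E i) (fun z => ψ z i)) ∧
        (∀ x : Fin n → ℝ, ∀ i, Hhat (π i) ⬝ᵥ x = ψ (H.mulVec x) i))
      ↔
    (∃ π : Equiv.Perm (Fin d),
        (∀ i j, i ∈ pa E j ↔ π i ∈ pa Ehat (π j)) ∧
        ∀ i, Hhat (π i) ∈ Submodule.span ℝ ((fun j => H j) '' barDom E i)) := by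
  
  constructor
  · rintro ⟨π, ψ, hdiffeo, hgraph, hdep, hψ⟩
    refine ⟨π, hgraph, fun i => ?_⟩
    have hsurj := mulVec_surjective_of_rank' H hH
    obtain ⟨g, hg⟩ := LinearMap.exists_rightInverse_of_surjective (f := H.mulVecLin)
      (LinearMap.range_eq_top.mpr (by intro y; obtain ⟨x, hx⟩ := hsurj y; exact ⟨x, hx⟩))
    have hgz : ∀ z, H.mulVec (g z) = z := fun z => by
      have := LinearMap.congr_fun hg z
      simpa [Matrix.mulVecLin_apply] using this
    have hlin : ∀ z, ψ z i = Hhat (π i) ⬝ᵥ g z := fun z => by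
      have := hψ (g z) i; rw [hgz] at this; exact this.symm
    set c : Fin d → ℝ := fun j => ψ (Pi.single j 1) i with hc
    have hczero : ∀ j ∉ barDom E i, c j = 0 := by
      intro j hj
      have h1 : ψ (Pi.single j 1) i = ψ 0 i := by
        apply hdep
        intro k hk
        rw [Pi.single_eq_of_ne (fun (h : k = j) => hj (h ▸ hk))]
        rfl
      rw [hc]
      simp only [h1, hlin 0, map_zero, dotProduct_zero]
    have hexpand : ∀ z, ψ z i = ∑ j, z j * c j := by
      intro z
      rw [hlin]
      have hz : z = ∑ j, z j • (Pi.single j 1 : Fin d → ℝ) := by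
        funext k
        simp [Pi.single_apply, Finset.sum_apply]
      conv_lhs => rw [hz]
      rw [map_sum]
      simp only [_root_.map_smul]
      simp only [dotProduct, Finset.sum_apply, Pi.smul_apply, smul_eq_mul,
        Finset.mul_sum]
      rw [Finset.sum_comm]
      apply Finset.sum_congr rfl
      intro j _
      rw [hc]
      simp only [hlin (Pi.single j 1), dotProduct, Finset.mul_sum]
      apply Finset.sum_congr rfl
      intro k _
      ring
    have hrow : Hhat (π i) = ∑ j, c j • H j := by
      funext k
      have h1 := hψ (Pi.single k 1) i
      rw [hexpand] at h1
      simp only [dotProduct_single, mul_one, Matrix.mulVec_single] at h1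
      rw [h1]
      simp [Finset.sum_apply, mul_comm]
    rw [hrow]
    apply Submodule.sum_mem
    intro j _
    by_cases hj : j ∈ barDom E i
    · exact Submodule.smul_mem _ _ (Submodule.subset_span ⟨j, hj, rfl⟩)
    · rw [hczero j hj, zero_smul]; exact Submodule.zero_mem _
  · rintro ⟨π, hgraph, hspan⟩
    choose c hsupp hsum using fun i =>
      (Finsupp.mem_span_image_iff_linearCombination ℝ).mp (hspan i)
    set C : Matrix (Fin d) (Fin d) ℝ := Matrix.of (fun i j => c i j) with hC
    have hCzero : ∀ i j, j ∉ barDom E i → C i j = 0 := fun i j hj => by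
      rw [hC]
      exact Finsupp.notMem_support_iff.mp (fun h => hj (hsupp i h))
    have hrow : ∀ i, Hhat (π i) = ∑ j, C i j • H j := by
      intro i
      rw [← hsum i, Finsupp.linearCombination_apply, Finsupp.sum_fintype]
      · rfl
      · intro; simp
    have keyA : ∀ (x : Fin n → ℝ) i, Hhat (π i) ⬝ᵥ x = C.mulVec (H.mulVec x) i := by
      intro x i
      rw [hrow i]
      simp only [Matrix.mulVec, dotProduct, Finset.sum_apply, Pi.smul_apply,
        smul_eq_mul, Finset.sum_mul, Finset.mul_sum]
      rw [Finset.sum_comm]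
      simp only [mul_assoc]
    have hCsurj : Function.Surjective C.mulVec := by
      intro y
      obtain ⟨x, hx⟩ := mulVec_surjective_of_rank' Hhat hHhat (fun k => y (π.symm k))
      refine ⟨H.mulVec x, funext fun i => ?_⟩
      rw [← keyA x i]
      have : Hhat (π i) ⬝ᵥ x = Hhat.mulVec x (π i) := rfl
      rw [this, hx]
      simp
    have hCbij : Function.Bijective C.mulVecLin := by
      have hs : Function.Surjective C.mulVecLin := by
        exact hCsurj
      exact ⟨LinearMap.injective_iff_surjective.mpr hs, hs⟩
    let e := LinearEquiv.ofBijective C.mulVecLin hCbij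
    have hψcd : ContDiff ℝ 1 (fun z => C.mulVec z) := by
      have h1 := (LinearMap.toContinuousLinearMap C.mulVecLin).contDiff (n := 1)
      rw [LinearMap.coe_toContinuousLinearMap'] at h1
      exact h1
    refine ⟨π, fun z => C.mulVec z, ⟨hψcd, e.symm, ?_, ?_, ?_⟩, hgraph, ?_, ?_⟩
    · have h1 := (LinearMap.toContinuousLinearMap e.symm.toLinearMap).contDiff (n := 1)
      rw [LinearMap.coe_toContinuousLinearMap'] at h1
      exact h1
    · intro z
      exact e.symm_apply_apply z
    · intro z
      exact e.apply_symm_apply z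
    · intro i z z' hzz'
      show C.mulVec z i = C.mulVec z' i
      simp only [Matrix.mulVec, dotProduct]
      apply Finset.sum_congr rfl
      intro j _
      by_cases hj : j ∈ barDom E i
      · rw [hzz' j hj]
      · rw [hCzero i j hj, zero_mul, zero_mul]
    · intro x i
      exact keyA x i
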